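/- arXiv:1210.8209 — 2 statements merged into one kernel-verified Lean document; each statement's English description precedes it below -/
import Mathlib

section
/- Let w be a positive radial function on [0,∞) with asymptotics w(r) = A_N r^{−(N−1)/2} e^{−r}(1 + O(1/r)) as r → ∞, A_N > 0, and let η ∈ (1/2, 1). Then there exist ρ₀ > 0 and c > 0, independent of k, such that for all ρ ≥ ρ₀ and all points Q₁,…,Q_{k+1} ∈ ℝ^N with min_{i≠j}|Q_i − Q_j| ≥ ρ, one has (Σ_{i=1}^{k} e^{−η|Q_i − Q_{k+1}|})² ≤ c Σ_{i=1}^{k} w(|Q_i − Q_{k+1}|). -/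
open Real MeasureTheory Metric Filter Set
open scoped ENNReal

private lemma int1d {b : ℝ} (hb : 0 < b) :
    Integrable (fun x : ℝ => Real.exp (-(b * |x|))) := by
  rw [← integrableOn_univ, ← Set.Iic_union_Ioi (a := (0 : ℝ))]
  refine IntegrableOn.union ?_ ?_
  · have m : MeasurableEmbedding fun x : ℝ => -x := (Homeomorph.neg ℝ).measurableEmbedding
    rw [← Measure.map_neg_eq_self (volume : Measure ℝ), m.integrableOn_map_iff]
    simp only [Function.comp_def, abs_neg, neg_preimage, neg_Iic, neg_zero]
    rw [integrableOn_Ici_iff_integrableOn_Ioi]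
    refine (exp_neg_integrableOn_Ioi 0 hb).congr_fun (fun x hx => ?_) measurableSet_Ioi
    simp only [neg_mul, abs_of_pos (mem_Ioi.1 hx)]
  · refine (exp_neg_integrableOn_Ioi 0 hb).congr_fun (fun x hx => ?_) measurableSet_Ioi
    simp only [neg_mul, abs_of_pos (mem_Ioi.1 hx)]

private lemma intE (N : ℕ) {a : ℝ} (ha : 0 < a) :
    Integrable (fun x : EuclideanSpace ℝ (Fin N) => Real.exp (-(a * ‖x‖))) := by
  have hmp := (EuclideanSpace.volume_preserving_symm_measurableEquiv_toLp (Fin N))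
  rw [← MeasurePreserving.integrable_comp_emb hmp.symm (MeasurableEquiv.measurableEmbedding _)]
  have hb0 : 0 < a / (N + 1) := by positivity
  have hF : Integrable (fun x : Fin N → ℝ => ∏ i, Real.exp (-(a / (N + 1) * |x i|))) :=
    Integrable.fintype_prod (fun _ => int1d hb0)
  refine hF.mono ?_ ?_
  · exact ((Real.continuous_exp.comp (by fun_prop)).measurable.comp
      (MeasurableEquiv.measurable _)).aestronglyMeasurable
  · refine Filter.Eventually.of_forall (fun x => ?_)
    have hcoord : ∀ (y : EuclideanSpace ℝ (Fin N)) (i : Fin N), |y i| ≤ ‖y‖ := by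
      intro y i
      rw [EuclideanSpace.norm_eq]
      calc |y i| = Real.sqrt (‖y i‖ ^ 2) := by
            rw [Real.sqrt_sq_eq_abs, Real.norm_eq_abs, abs_abs]
        _ ≤ _ := Real.sqrt_le_sqrt (Finset.single_le_sum
            (fun j _ => sq_nonneg ‖y j‖) (Finset.mem_univ i))
    set y : EuclideanSpace ℝ (Fin N) := (MeasurableEquiv.toLp 2 (Fin N → ℝ)) x with hy
    have hyx : ∀ i, y i = x i := fun i => rfl
    have h1 : ∑ i, |x i| ≤ (N + 1) * ‖y‖ := by
      calc ∑ i, |x i| ≤ ∑ _i : Fin N, ‖y‖ := by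
            refine Finset.sum_le_sum (fun i _ => ?_)
            rw [← hyx i]; exact hcoord y i
        _ = N * ‖y‖ := by simp [Finset.sum_const]
        _ ≤ (N + 1) * ‖y‖ := by nlinarith [norm_nonneg y]
    have h2 : a / (N + 1) * ∑ i, |x i| ≤ a * ‖y‖ := by
      rw [div_mul_eq_mul_div, div_le_iff₀ (by positivity)]
      calc a * ∑ i, |x i| ≤ a * ((N + 1) * ‖y‖) := by
            exact mul_le_mul_of_nonneg_left h1 ha.le
        _ = a * ‖y‖ * (N + 1) := by ring
    simp only [Function.comp_apply, Real.norm_eq_abs, Real.abs_exp]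
    calc Real.exp (-(a * ‖y‖)) ≤ Real.exp (-(a / (N + 1) * ∑ i, |x i|)) := by
          apply Real.exp_le_exp.2; linarith
      _ = ∏ i, Real.exp (-(a / (N + 1) * |x i|)) := by
          rw [← Real.exp_sum]; congr 1
          rw [Finset.mul_sum, Finset.sum_neg_distrib]
      _ ≤ ‖∏ i, Real.exp (-(a / (N + 1) * |x i|))‖ := le_abs_self _

private lemma packing (N : ℕ) {β r₀ : ℝ} (hβ : 0 < β) (hr₀ : 0 < r₀) :
    ∃ S : ℝ, 0 < S ∧ ∀ (k : ℕ) (Q : Fin (k + 1) → EuclideanSpace ℝ (Fin N)),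
      (∀ i j : Fin (k + 1), i ≠ j → 2 * r₀ ≤ dist (Q i) (Q j)) →
      ∑ i : Fin k, Real.exp (-(β * dist (Q i.castSucc) (Q (Fin.last k)))) ≤ S := by
  set a : ℝ := 2 * β / 3 with ha_def
  have ha : 0 < a := by positivity
  set T : ℝ≥0∞ := ∫⁻ y : EuclideanSpace ℝ (Fin N), ENNReal.ofReal (Real.exp (-(a * ‖y‖))) with hT_def
  have hT : T < ⊤ := (intE N ha).lintegral_lt_top
  set V : ℝ≥0∞ := volume (ball (0 : EuclideanSpace ℝ (Fin N)) r₀) with hV_def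
  have hV0 : 0 < V := measure_ball_pos _ _ hr₀
  have hVtop : V < ⊤ := measure_ball_lt_top
  refine ⟨(T / V).toReal + 1, by positivity, ?_⟩
  intro k Q hsep
  have hTV : T / V < ⊤ := ENNReal.div_lt_top hT.ne (hV0.ne')
  have hd : ∀ i : Fin k, 2 * r₀ ≤ dist (Q i.castSucc) (Q (Fin.last k)) := by
    intro i
    exact hsep _ _ (Fin.castSucc_lt_last i).ne
  -- key per-ball estimate
  have hkey : ∀ i : Fin k,
      ENNReal.ofReal (Real.exp (-(β * dist (Q i.castSucc) (Q (Fin.last k))))) * V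
        ≤ ∫⁻ x in ball (Q i.castSucc) r₀,
            ENNReal.ofReal (Real.exp (-(a * dist x (Q (Fin.last k))))) := by
    intro i
    set d : ℝ := dist (Q i.castSucc) (Q (Fin.last k)) with hd_def
    have hdi : 2 * r₀ ≤ d := hd i
    have hvol : volume (ball (Q i.castSucc) r₀) = V := by
      rw [hV_def, Measure.addHaar_ball_center]
    calc ENNReal.ofReal (Real.exp (-(β * d))) * V
        = ∫⁻ _ in ball (Q i.castSucc) r₀, ENNReal.ofReal (Real.exp (-(β * d))) := by
          rw [setLIntegral_const, hvol]
      _ ≤ _ := by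
          refine setLIntegral_mono' measurableSet_ball (fun x hx => ?_)
          refine ENNReal.ofReal_le_ofReal (Real.exp_le_exp.2 ?_)
          have h1 : dist x (Q (Fin.last k)) ≤ r₀ + d := by
            have := dist_triangle x (Q i.castSucc) (Q (Fin.last k))
            have hx' : dist x (Q i.castSucc) < r₀ := mem_ball.1 hx
            linarith
          have h2 : a * dist x (Q (Fin.last k)) ≤ β * d := by
            have hnn : 0 ≤ dist x (Q (Fin.last k)) := dist_nonneg
            calc a * dist x (Q (Fin.last k)) ≤ a * (r₀ + d) :=
                  mul_le_mul_of_nonneg_left h1 ha.le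
              _ ≤ a * (3 / 2 * d) := by
                  refine mul_le_mul_of_nonneg_left (by linarith) ha.le
              _ = β * d := by rw [ha_def]; ring
          linarith
  -- disjointness and summation
  have hdisj : Pairwise (Function.onFun Disjoint
      (fun i : Fin k => ball (Q i.castSucc) r₀)) := by
    intro i j hij
    refine ball_disjoint_ball ?_
    have : (i.castSucc : Fin (k + 1)) ≠ j.castSucc := by
      simpa using fun h => hij (Fin.castSucc_injective k h)
    calc r₀ + r₀ = 2 * r₀ := by ring
      _ ≤ _ := hsep _ _ this
  have hsum : ∑ i : Fin k,
      ENNReal.ofReal (Real.exp (-(β * dist (Q i.castSucc) (Q (Fin.last k))))) * V ≤ T := by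
    calc ∑ i : Fin k, ENNReal.ofReal (Real.exp (-(β * dist (Q i.castSucc) (Q (Fin.last k))))) * V
        ≤ ∑ i : Fin k, ∫⁻ x in ball (Q i.castSucc) r₀,
            ENNReal.ofReal (Real.exp (-(a * dist x (Q (Fin.last k))))) :=
          Finset.sum_le_sum (fun i _ => hkey i)
      _ = ∫⁻ x in ⋃ i : Fin k, ball (Q i.castSucc) r₀,
            ENNReal.ofReal (Real.exp (-(a * dist x (Q (Fin.last k))))) := by
          rw [lintegral_iUnion (fun i => measurableSet_ball) hdisj, tsum_fintype]
      _ ≤ ∫⁻ x : EuclideanSpace ℝ (Fin N),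
            ENNReal.ofReal (Real.exp (-(a * dist x (Q (Fin.last k))))) :=
          setLIntegral_le_lintegral _ _
      _ = T := by
          rw [hT_def]
          simp_rw [dist_eq_norm]
          exact lintegral_sub_right_eq_self
            (fun y => ENNReal.ofReal (Real.exp (-(a * ‖y‖)))) (Q (Fin.last k))
  have hsum2 : ENNReal.ofReal (∑ i : Fin k,
      Real.exp (-(β * dist (Q i.castSucc) (Q (Fin.last k))))) ≤ T / V := by
    rw [ENNReal.ofReal_sum_of_nonneg (fun i _ => (Real.exp_pos _).le)]
    rw [ENNReal.le_div_iff_mul_le (Or.inl hV0.ne') (Or.inl hVtop.ne)]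
    rw [Finset.sum_mul]
    exact hsum
  have := (ENNReal.ofReal_le_iff_le_toReal hTV.ne).1 hsum2
  linarith


/-- If `w(r) = A_N r^{−(N−1)/2} e^{−r}(1+O(1/r))` and `η ∈ (1/2, 1)`,
then for `ρ` large and `ρ`-separated points `Q₁,…,Q_{k+1}`,
`(Σᵢ₌₁ᵏ e^{−η|Qᵢ−Q_{k+1}|})² ≤ c Σᵢ₌₁ᵏ w(|Qᵢ−Q_{k+1}|)`, with `c` independent of `k`. -/
theorem stmt10
    (N : ℕ) (hN : 2 ≤ N)
    (w : ℝ → ℝ)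
    (hw_pos : ∀ r : ℝ, 0 ≤ r → 0 < w r)
    (A : ℝ) (hA : 0 < A)
    (hasymp : ∃ C₁ r₁ : ℝ, 0 < C₁ ∧ 0 < r₁ ∧ ∀ r : ℝ, r₁ ≤ r →
      |w r - A * r ^ (-((N : ℝ) - 1) / 2) * Real.exp (-r)|
        ≤ C₁ * r ^ (-((N : ℝ) - 1) / 2) * Real.exp (-r) / r)
    (η : ℝ) (hη₀ : 1 / 2 < η) (hη₁ : η < 1) :
    ∃ ρ₀ c : ℝ, 0 < ρ₀ ∧ 0 < c ∧
      ∀ ρ : ℝ, ρ₀ ≤ ρ → ∀ k : ℕ,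
        ∀ Q : Fin (k + 1) → EuclideanSpace ℝ (Fin N),
          (∀ i j : Fin (k + 1), i ≠ j → ρ ≤ dist (Q i) (Q j)) →
          (∑ i : Fin k, Real.exp (-η * dist (Q i.castSucc) (Q (Fin.last k)))) ^ 2
            ≤ c * ∑ i : Fin k, w (dist (Q i.castSucc) (Q (Fin.last k))) := by
  obtain ⟨C₁, r₁, hC₁, hr₁, hasy⟩ := hasymp
  set p : ℝ := ((N : ℝ) - 1) / 2 with hp_def
  set β : ℝ := η - 1 / 2 with hβ_def
  set θ : ℝ := η + 1 / 2 with hθ_def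
  have hβ : 0 < β := by rw [hβ_def]; linarith
  -- eventually d ^ p * exp (-β * d) ≤ 1
  obtain ⟨D, hD⟩ : ∃ D : ℝ, ∀ d : ℝ, D ≤ d → d ^ p * Real.exp (-β * d) ≤ 1 := by
    have ht := tendsto_rpow_mul_exp_neg_mul_atTop_nhds_zero p β hβ
    have hev : ∀ᶠ x in atTop, x ^ p * Real.exp (-β * x) < 1 :=
      ht.eventually (gt_mem_nhds one_pos)
    obtain ⟨D, hD⟩ := eventually_atTop.1 hev
    exact ⟨D, fun d hd => (hD d hd).le⟩
  set ρ₀ : ℝ := max (max 1 r₁) (max (2 * C₁ / A) D) with hρ₀_def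
  have hρ₀pos : (0 : ℝ) < ρ₀ :=
    lt_of_lt_of_le one_pos (le_trans (le_max_left 1 r₁) (le_max_left _ _))
  obtain ⟨S, hS, hpack⟩ := packing N hβ (show (0 : ℝ) < ρ₀ / 2 by linarith)
  -- lower bound for w
  have hwlb : ∀ d : ℝ, ρ₀ ≤ d → Real.exp (-(θ * d)) ≤ 2 / A * w d := by
    intro d hd
    have hd1 : (1 : ℝ) ≤ d := le_trans (le_trans (le_max_left 1 r₁) (le_max_left _ _)) hd
    have hd0 : (0 : ℝ) < d := by linarith
    have hdr₁ : r₁ ≤ d := le_trans (le_trans (le_max_right 1 r₁) (le_max_left _ _)) hd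
    have hdCA : 2 * C₁ / A ≤ d :=
      le_trans (le_trans (le_max_left _ D) (le_max_right _ _)) hd
    have hdD : D ≤ d := le_trans (le_trans (le_max_right (2 * C₁ / A) D) (le_max_right _ _)) hd
    have habs := hasy d hdr₁
    set P : ℝ := d ^ (-((N : ℝ) - 1) / 2) with hP_def
    have hPpos : 0 < P := Real.rpow_pos_of_pos hd0 _
    have hEpos : 0 < Real.exp (-d) := Real.exp_pos _
    -- error term control
    have herr : C₁ * P * Real.exp (-d) / d ≤ A / 2 * (P * Real.exp (-d)) := by
      rw [div_le_iff₀ hd0]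
      have hCd : C₁ ≤ A / 2 * d := by
        rw [div_le_iff₀ hA] at hdCA
        nlinarith
      nlinarith [mul_pos hPpos hEpos]
    have hw1 : A / 2 * (P * Real.exp (-d)) ≤ w d := by
      have h1 : w d - A * P * Real.exp (-d) ≥ -(C₁ * P * Real.exp (-d) / d) := by
        have := abs_le.1 habs
        linarith [this.1]
      nlinarith [mul_pos hPpos hEpos]
    -- exp (-(θ * d)) ≤ P * exp (-d)
    have hPinv : P = (d ^ p)⁻¹ := by
      rw [hP_def, hp_def, neg_div, Real.rpow_neg hd0.le]
    have hppos : 0 < d ^ p := Real.rpow_pos_of_pos hd0 _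
    have hexp : Real.exp (-(β * d)) ≤ P := by
      rw [hPinv, ← one_div, le_div_iff₀ hppos]
      calc Real.exp (-(β * d)) * d ^ p = d ^ p * Real.exp (-β * d) := by
            rw [neg_mul]; ring
        _ ≤ 1 := hD d hdD
    have h2 : Real.exp (-(θ * d)) ≤ P * Real.exp (-d) := by
      have : Real.exp (-(θ * d)) = Real.exp (-(β * d)) * Real.exp (-d) := by
        rw [← Real.exp_add]; congr 1; rw [hθ_def, hβ_def]; ring
      rw [this]
      exact mul_le_mul_of_nonneg_right hexp hEpos.le
    calc Real.exp (-(θ * d)) ≤ P * Real.exp (-d) := h2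
      _ = 2 / A * (A / 2 * (P * Real.exp (-d))) := by field_simp
      _ ≤ 2 / A * w d := by
          refine mul_le_mul_of_nonneg_left hw1 (by positivity)
  refine ⟨ρ₀, 2 / A * S, hρ₀pos, by positivity, ?_⟩
  intro ρ hρ k Q hsep
  set d : Fin k → ℝ := fun i => dist (Q i.castSucc) (Q (Fin.last k)) with hd_def
  have hdi : ∀ i, ρ₀ ≤ d i := fun i =>
    le_trans hρ (hsep _ _ (Fin.castSucc_lt_last i).ne)
  have hsep' : ∀ i j : Fin (k + 1), i ≠ j → 2 * (ρ₀ / 2) ≤ dist (Q i) (Q j) := by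
    intro i j hij
    calc 2 * (ρ₀ / 2) = ρ₀ := by ring
      _ ≤ ρ := hρ
      _ ≤ _ := hsep i j hij
  have hCS : (∑ i : Fin k, Real.exp (-η * d i)) ^ 2
      ≤ (∑ i : Fin k, Real.exp (-(θ * d i))) * ∑ i : Fin k, Real.exp (-(β * d i)) := by
    have hsplit : ∀ i : Fin k,
        Real.exp (-η * d i) = Real.exp (-(θ / 2 * d i)) * Real.exp (-(β / 2 * d i)) := by
      intro i
      rw [← Real.exp_add]; congr 1; rw [hθ_def, hβ_def]; ring
    have hsq1 : ∀ i : Fin k, Real.exp (-(θ / 2 * d i)) ^ 2 = Real.exp (-(θ * d i)) := by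
      intro i; rw [sq, ← Real.exp_add]; congr 1; ring
    have hsq2 : ∀ i : Fin k, Real.exp (-(β / 2 * d i)) ^ 2 = Real.exp (-(β * d i)) := by
      intro i; rw [sq, ← Real.exp_add]; congr 1; ring
    calc (∑ i : Fin k, Real.exp (-η * d i)) ^ 2
        = (∑ i : Fin k, Real.exp (-(θ / 2 * d i)) * Real.exp (-(β / 2 * d i))) ^ 2 := by
          rw [Finset.sum_congr rfl (fun i _ => hsplit i)]
      _ ≤ (∑ i : Fin k, Real.exp (-(θ / 2 * d i)) ^ 2)
            * ∑ i : Fin k, Real.exp (-(β / 2 * d i)) ^ 2 :=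
          Finset.sum_mul_sq_le_sq_mul_sq _ _ _
      _ = _ := by
          rw [Finset.sum_congr rfl (fun i _ => hsq1 i),
            Finset.sum_congr rfl (fun i _ => hsq2 i)]
  have hfac1 : ∑ i : Fin k, Real.exp (-(θ * d i)) ≤ 2 / A * ∑ i : Fin k, w (d i) := by
    rw [Finset.mul_sum]
    exact Finset.sum_le_sum (fun i _ => hwlb (d i) (hdi i))
  have hfac2 : ∑ i : Fin k, Real.exp (-(β * d i)) ≤ S := hpack k Q hsep'
  have hnn1 : 0 ≤ ∑ i : Fin k, Real.exp (-(θ * d i)) :=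
    Finset.sum_nonneg (fun i _ => (Real.exp_pos _).le)
  have hnn2 : 0 ≤ ∑ i : Fin k, Real.exp (-(β * d i)) :=
    Finset.sum_nonneg (fun i _ => (Real.exp_pos _).le)
  calc (∑ i : Fin k, Real.exp (-η * d i)) ^ 2
      ≤ (∑ i : Fin k, Real.exp (-(θ * d i))) * ∑ i : Fin k, Real.exp (-(β * d i)) := hCS
    _ ≤ (2 / A * ∑ i : Fin k, w (d i)) * S := by
        refine mul_le_mul hfac1 hfac2 hnn2 ?_
        refine le_trans hnn1 hfac1
    _ = 2 / A * S * ∑ i : Fin k, w (d i) := by ring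
end

section
/- Let w : [0,∞) → (0,∞) satisfy w(r) ≤ C₀ e^{−r} for all r ≥ ρ. Then there exist ρ₀ > 0 (depending only on N, and such that 6^N < e^{ρ₀/2}) and C > 0 (depending only on N and C₀) such that for all ρ ≥ ρ₀, all k ≥ 2 and all points Q₁,…,Q_k ∈ ℝ^N with min_{i≠j}|Q_i − Q_j| ≥ ρ, one has Σ_{j=1}^{k−1} w(|Q_j − Q_k|) ≤ C e^{−ρ}. (The proof uses that around any ball of radius ρ there are at most 6^N non-overlapping balls of radius ρ, so the number of points Q_j at distance at most ρ + (m/2)ρ from Q_k grows at most like (6^N)^m.) -/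
open Real Metric MeasureTheory ENNReal

lemma packing_s11 (N : ℕ) (hN : 1 ≤ N) (ρ R : ℝ) (hρ : 0 < ρ) (hR : 0 ≤ R)
    (k : ℕ) (P : EuclideanSpace ℝ (Fin N)) (Q : Fin k → EuclideanSpace ℝ (Fin N))
    (hsep : ∀ i j : Fin k, i ≠ j → ρ ≤ dist (Q i) (Q j))
    (hball : ∀ i, dist (Q i) P ≤ R) :
    (k : ℝ) * (ρ/2)^N ≤ (R + ρ/2)^N := by
  set B := volume (ball (0:EuclideanSpace ℝ (Fin N)) 1) with hB
  haveI : Nontrivial (EuclideanSpace ℝ (Fin N)) := Module.nontrivial_of_finrank_pos (by rw [finrank_euclideanSpace_fin]; omega)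
  have hB0 : B ≠ 0 := (measure_ball_pos volume 0 one_pos).ne'
  have hBt : B ≠ ⊤ := measure_ball_lt_top.ne
  have hρ2 : (0:ℝ) ≤ ρ/2 := by linarith
  have hvol : ∀ x : EuclideanSpace ℝ (Fin N), ∀ r : ℝ, 0 ≤ r →
      volume (ball x r) = ENNReal.ofReal (r ^ N) * B := by
    intro x r hr
    rw [Measure.addHaar_ball volume x hr, finrank_euclideanSpace_fin]
  have hdisj : (↑(Finset.univ : Finset (Fin k)) : Set (Fin k)).PairwiseDisjoint
      (fun i => ball (Q i) (ρ/2)) := by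
    intro i _ j _ hij
    exact ball_disjoint_ball (by linarith [hsep i j hij])
  have hsub : (⋃ i ∈ (Finset.univ : Finset (Fin k)), ball (Q i) (ρ/2)) ⊆ ball P (R + ρ/2) := by
    intro z hz
    simp only [Set.mem_iUnion, mem_ball] at hz ⊢
    obtain ⟨i, _, hi⟩ := hz
    calc dist z P ≤ dist z (Q i) + dist (Q i) P := dist_triangle _ _ _
      _ < ρ/2 + R := by have := hball i; linarith
      _ = R + ρ/2 := by ring
  have key : (k : ℝ≥0∞) * (ENNReal.ofReal ((ρ/2) ^ N) * B) ≤ ENNReal.ofReal ((R + ρ/2) ^ N) * B := by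
    calc (k : ℝ≥0∞) * (ENNReal.ofReal ((ρ/2) ^ N) * B)
        = ∑ i : Fin k, volume (ball (Q i) (ρ/2)) := by
          simp [hvol _ _ hρ2, Finset.sum_const, nsmul_eq_mul]
      _ = volume (⋃ i ∈ (Finset.univ : Finset (Fin k)), ball (Q i) (ρ/2)) :=
          (measure_biUnion_finset hdisj (fun i _ => measurableSet_ball)).symm
      _ ≤ volume (ball P (R + ρ/2)) := measure_mono hsub
      _ = ENNReal.ofReal ((R + ρ/2) ^ N) * B := hvol _ _ (by linarith)
  rw [← mul_assoc] at key
  have key2 : (k : ℝ≥0∞) * ENNReal.ofReal ((ρ/2) ^ N) ≤ ENNReal.ofReal ((R + ρ/2) ^ N) :=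
    (ENNReal.mul_le_mul_iff_left hB0 hBt).mp key
  have : ENNReal.ofReal ((k : ℝ) * (ρ/2) ^ N) ≤ ENNReal.ofReal ((R + ρ/2) ^ N) := by
    rwa [ENNReal.ofReal_mul (by positivity), ENNReal.ofReal_natCast]
  exact (ENNReal.ofReal_le_ofReal_iff (by positivity)).mp this

lemma term_bound (N : ℕ) (ρ : ℝ) (h : (6:ℝ)^N * Real.exp (-ρ/2) ≤ 1/2) (n : ℕ) :
    ((n + 4 : ℕ) : ℝ)^N * Real.exp (-(((n:ℝ) + 2)) * ρ/2)
      ≤ 4 * 6^N * Real.exp (-ρ) * (1/2 : ℝ)^(n+2) := by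
  have hA : (0:ℝ) < Real.exp (-ρ/2) := Real.exp_pos _
  have h1 : ((n + 4 : ℕ) : ℝ) ≤ (6:ℝ)^(n+1) := by
    have : (n + 4 : ℕ) ≤ 6^(n+1) := by
      calc n + 4 ≤ 6 * (n + 1) := by omega
        _ ≤ 6 * 6^n := by
            have : n < 6^n := Nat.lt_pow_self (by norm_num)
            omega
        _ = 6^(n+1) := by ring
    exact_mod_cast this
  have h2 : ((n + 4 : ℕ) : ℝ)^N ≤ ((6:ℝ)^(n+1))^N :=
    pow_le_pow_left₀ (by positivity) h1 N
  have h3 : ((6:ℝ)^(n+1))^N = 6^N * ((6:ℝ)^N)^n := by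
    rw [← pow_mul, ← pow_mul]; ring_nf
  have h4 : Real.exp (-(((n:ℝ) + 2)) * ρ/2) = Real.exp (-ρ) * (Real.exp (-ρ/2))^n := by
    rw [← Real.exp_nat_mul, ← Real.exp_add]; ring_nf
  have h5 : ((6:ℝ)^N * Real.exp (-ρ/2))^n ≤ (1/2:ℝ)^n :=
    pow_le_pow_left₀ (by positivity) h n
  calc ((n + 4 : ℕ) : ℝ)^N * Real.exp (-(((n:ℝ) + 2)) * ρ/2)
      ≤ (6^N * ((6:ℝ)^N)^n) * (Real.exp (-ρ) * (Real.exp (-ρ/2))^n) := by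
        rw [← h3, ← h4]
        exact mul_le_mul_of_nonneg_right h2 (Real.exp_pos _).le
    _ = 6^N * Real.exp (-ρ) * ((6:ℝ)^N * Real.exp (-ρ/2))^n := by
        rw [mul_pow]; ring
    _ ≤ 6^N * Real.exp (-ρ) * (1/2:ℝ)^n := by
        exact mul_le_mul_of_nonneg_left h5 (by positivity)
    _ = 4 * 6^N * Real.exp (-ρ) * (1/2:ℝ)^(n+2) := by ring

/-- If `w(r) ≤ C₀ e^{−r}` for `r ≥ ρ`, then there exist `ρ₀ > 0`
(with `6^N < e^{ρ₀/2}`) and `C > 0`, such that for all `ρ ≥ ρ₀`, all `k ≥ 2`, and all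
`ρ`-separated points `Q₁,…,Q_k`, one has `Σ_{j=1}^{k−1} w(|Q_j − Q_k|) ≤ C e^{−ρ}`. -/
theorem stmt11
    (N : ℕ) (hN : 2 ≤ N)
    (w : ℝ → ℝ)
    (hw_pos : ∀ r : ℝ, 0 ≤ r → 0 < w r)
    (C₀ : ℝ) (hC₀ : 0 < C₀) :
    ∃ ρ₀ C : ℝ, 0 < ρ₀ ∧ 0 < C ∧ (6 : ℝ) ^ N < Real.exp (ρ₀ / 2) ∧
      ∀ ρ : ℝ, ρ₀ ≤ ρ →
        (∀ r : ℝ, ρ ≤ r → w r ≤ C₀ * Real.exp (-r)) →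
        ∀ k : ℕ, 1 ≤ k →
          ∀ Q : Fin (k + 1) → EuclideanSpace ℝ (Fin N),
            (∀ i j : Fin (k + 1), i ≠ j → ρ ≤ dist (Q i) (Q j)) →
            (∑ j : Fin k, w (dist (Q j.castSucc) (Q (Fin.last k))))
              ≤ C * Real.exp (-ρ) := by
  have h6 : (1:ℝ) < 6^N := one_lt_pow₀ (by norm_num) (by omega)
  have h26 : (1:ℝ) < 2 * 6^N := by linarith
  refine ⟨2 * Real.log (2 * 6^N), 8 * 6^N * C₀, ?_, by positivity, ?_, ?_⟩
  · have := Real.log_pos h26; linarith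
  · rw [show (2 : ℝ) * Real.log (2 * 6^N) / 2 = Real.log (2 * 6^N) by ring,
      Real.exp_log (by linarith)]
    linarith
  intro ρ hρ₀ hw k hk Q hsep
  have hρpos : 0 < ρ := lt_of_lt_of_le (by have := Real.log_pos h26; linarith) hρ₀
  have hhalf : (6:ℝ)^N * Real.exp (-ρ/2) ≤ 1/2 := by
    have h1 : Real.exp (ρ/2) ≥ 2 * 6^N := by
      calc Real.exp (ρ/2) ≥ Real.exp (2 * Real.log (2 * 6^N) / 2) :=
            Real.exp_le_exp.mpr (by linarith)
        _ = 2 * 6^N := by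
            rw [show (2 : ℝ) * Real.log (2 * 6^N) / 2 = Real.log (2 * 6^N) by ring,
              Real.exp_log (by linarith)]
    have h2 : Real.exp (-ρ/2) = (Real.exp (ρ/2))⁻¹ := by
      rw [← Real.exp_neg]; ring_nf
    rw [h2]
    rw [ge_iff_le, ← inv_le_inv₀ (by positivity) (by positivity)] at h1
    calc (6:ℝ)^N * (Real.exp (ρ/2))⁻¹ ≤ (6:ℝ)^N * (2 * 6^N)⁻¹ :=
          mul_le_mul_of_nonneg_left h1 (by positivity)
      _ = 1/2 * (6^N * (6^N)⁻¹) := by ring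
      _ = 1/2 := by rw [mul_inv_cancel₀ (by positivity)]; ring
  set P := Q (Fin.last k) with hP
  set d : Fin k → ℝ := fun j => dist (Q j.castSucc) P with hd
  have hdρ : ∀ j, ρ ≤ d j := by
    intro j
    exact hsep _ _ (ne_of_lt (Fin.castSucc_lt_last j))
  set mf : Fin k → ℕ := fun j => ⌊2 * d j / ρ⌋₊ with hmf
  have hm2 : ∀ j, 2 ≤ mf j := by
    intro j
    have : (2:ℝ) ≤ 2 * d j / ρ := by
      rw [le_div_iff₀ hρpos]
      have := hdρ j; linarith
    exact Nat.le_floor (by exact_mod_cast this)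
  have hmlow : ∀ j, (mf j : ℝ) * ρ / 2 ≤ d j := by
    intro j
    have h1 : (mf j : ℝ) ≤ 2 * d j / ρ :=
      Nat.floor_le (div_nonneg (by linarith [hdρ j]) hρpos.le)
    rw [le_div_iff₀ hρpos] at h1
    linarith
  have hmhigh : ∀ j, d j ≤ ((mf j : ℝ) + 1) * ρ / 2 := by
    intro j
    have h1 : 2 * d j / ρ < (mf j : ℝ) + 1 := Nat.lt_floor_add_one _
    rw [div_lt_iff₀ hρpos] at h1
    nlinarith
  -- cardinality of fibers
  have hcard : ∀ m : ℕ, ((Finset.univ.filter (fun j => mf j = m)).card : ℝ) ≤ ((m:ℝ) + 2)^N := by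
    intro m
    set s := Finset.univ.filter (fun j => mf j = m) with hs
    have hR : (0:ℝ) ≤ ((m:ℝ) + 1) * ρ / 2 := by positivity
    have hpack := packing_s11 N (by omega) ρ (((m:ℝ) + 1) * ρ / 2) hρpos hR s.card P
      (fun i => Q ((s.orderIsoOfFin rfl i : Fin k)).castSucc)
      (fun i j hij => by
        apply hsep
        intro h
        exact hij ((s.orderIsoOfFin rfl).injective
          (Subtype.ext (Fin.castSucc_injective k h))))
      (fun i => by
        have hmem : mf (s.orderIsoOfFin rfl i : Fin k) = m :=
          (Finset.mem_filter.mp (s.orderIsoOfFin rfl i).2).2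
        have h2 : ((mf (s.orderIsoOfFin rfl i : Fin k) : ℝ) + 1) * ρ / 2
            = ((m:ℝ) + 1) * ρ / 2 := by rw [hmem]
        exact le_trans (hmhigh (s.orderIsoOfFin rfl i : Fin k)) (le_of_eq h2))
    have hexp : ((m:ℝ) + 1) * ρ / 2 + ρ/2 = ((m:ℝ) + 2) * (ρ/2) := by ring
    rw [hexp, mul_pow] at hpack
    have hpow : (0:ℝ) < (ρ/2)^N := by positivity
    exact le_of_mul_le_mul_right hpack hpow
  -- main estimate
  have step1 : (∑ j : Fin k, w (d j)) ≤ ∑ j : Fin k, C₀ * Real.exp (-(mf j : ℝ) * ρ / 2) := by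
    apply Finset.sum_le_sum
    intro j _
    calc w (d j) ≤ C₀ * Real.exp (-(d j)) := hw _ (hdρ j)
      _ ≤ C₀ * Real.exp (-(mf j : ℝ) * ρ / 2) := by
          apply mul_le_mul_of_nonneg_left _ hC₀.le
          apply Real.exp_le_exp.mpr
          have := hmlow j; linarith
  set g : ℕ → ℝ := fun m => C₀ * Real.exp (-(m : ℝ) * ρ / 2) with hg
  have step2 : (∑ j : Fin k, g (mf j))
      = ∑ b ∈ Finset.univ.image mf, ((Finset.univ.filter (fun j => mf j = b)).card) • g b :=
    Finset.sum_comp g mf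
  have step3 : ∀ b ∈ Finset.univ.image mf,
      ((Finset.univ.filter (fun j => mf j = b)).card) • g b
        ≤ 4 * 6^N * C₀ * Real.exp (-ρ) * (1/2:ℝ)^b := by
    intro b hb
    obtain ⟨j, _, hj⟩ := Finset.mem_image.mp hb
    obtain ⟨n, rfl⟩ : ∃ n, b = n + 2 := ⟨b - 2, by have := hm2 j; omega⟩
    have hcb := hcard (n + 2)
    have hgpos : 0 ≤ g (n + 2) := by
      rw [hg]; positivity
    calc ((Finset.univ.filter (fun j => mf j = n + 2)).card) • g (n + 2)
        = ((Finset.univ.filter (fun j => mf j = n + 2)).card : ℝ) * g (n + 2) :=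
          nsmul_eq_mul _ _
      _ ≤ ((n:ℝ) + 2 + 2)^N * g (n + 2) := by
          exact mul_le_mul_of_nonneg_right (by push_cast at hcb ⊢; linarith) hgpos
      _ = C₀ * (((n + 4 : ℕ) : ℝ)^N * Real.exp (-(((n:ℝ) + 2)) * ρ/2)) := by
          rw [hg]; push_cast; ring_nf
      _ ≤ C₀ * (4 * 6^N * Real.exp (-ρ) * (1/2:ℝ)^(n+2)) :=
          mul_le_mul_of_nonneg_left (term_bound N ρ hhalf n) hC₀.le
      _ = 4 * 6^N * C₀ * Real.exp (-ρ) * (1/2:ℝ)^(n+2) := by ring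
  have step4 : (∑ b ∈ Finset.univ.image mf, (4 * 6^N * C₀ * Real.exp (-ρ)) * (1/2:ℝ)^b)
      ≤ 8 * 6^N * C₀ * Real.exp (-ρ) := by
    rw [← Finset.mul_sum]
    have hsum : (∑ b ∈ Finset.univ.image mf, (1/2:ℝ)^b) ≤ 2 := by
      have h1 : (∑ b ∈ Finset.univ.image mf, (1/2:ℝ)^b) ≤ ∑' b : ℕ, (1/2:ℝ)^b :=
        Summable.sum_le_tsum _ (fun b _ => by positivity)
          (summable_geometric_of_lt_one (by norm_num) (by norm_num))
      rw [tsum_geometric_of_lt_one (by norm_num) (by norm_num)] at h1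
      norm_num at h1
      linarith
    calc (4 * 6^N * C₀ * Real.exp (-ρ)) * (∑ b ∈ Finset.univ.image mf, (1/2:ℝ)^b)
        ≤ (4 * 6^N * C₀ * Real.exp (-ρ)) * 2 := by
          exact mul_le_mul_of_nonneg_left hsum (by positivity)
      _ = 8 * 6^N * C₀ * Real.exp (-ρ) := by ring
  calc (∑ j : Fin k, w (dist (Q j.castSucc) (Q (Fin.last k))))
      = ∑ j : Fin k, w (d j) := rfl
    _ ≤ ∑ j : Fin k, g (mf j) := step1
    _ = ∑ b ∈ Finset.univ.image mf, ((Finset.univ.filter (fun j => mf j = b)).card) • g b := step2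
    _ ≤ ∑ b ∈ Finset.univ.image mf, (4 * 6^N * C₀ * Real.exp (-ρ)) * (1/2:ℝ)^b := by
        apply Finset.sum_le_sum
        intro b hb
        have := step3 b hb
        linarith [this]
    _ ≤ 8 * 6^N * C₀ * Real.exp (-ρ) := step4
    _ = 8 * 6^N * C₀ * Real.exp (-ρ) := rfl
end
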